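/- arXiv:2502.15146 — 3 statements merged into one kernel-verified Lean document; each statement's English description precedes it below -/
import Mathlib

section
/- Let (D, d) be a pseudometric space where d is conditionally negative definite, and suppose Chebyshev centers exist for all nonempty bounded sets. Then the ball-Hausdorff distance bh(A₁, A₂) = d(c(A₁), c(A₂)) + |R(A₁) − R(A₂)| is conditionally negative definite on the class of nonempty bounded sets of D. -/
/-- A function `g : D × D → ℝ` is conditionally negative definite. -/
def IsCND {D : Type*} (g : D → D → ℝ) : Prop :=
  ∀ (m : ℕ) (s : Fin m → D) (b : Fin m → ℝ), (∑ i, b i = 0) →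
    ∑ i, ∑ j, b i * b j * g (s i) (s j) ≤ 0

/-- The radius of the smallest open ball centered at `x` containing `A`. -/
noncomputable def coverRad {D : Type*} [PseudoMetricSpace D] (x : D) (A : Set D) : ℝ :=
  sInf {r : ℝ | 0 ≤ r ∧ A ⊆ Metric.ball x r}

/-- The Chebyshev radius of `A`. -/
noncomputable def chebRad {D : Type*} [PseudoMetricSpace D] (A : Set D) : ℝ :=
  sInf {r : ℝ | ∃ x : D, 0 ≤ r ∧ A ⊆ Metric.ball x r}

/-- `x` is a Chebyshev center of `A` if it attains the Chebyshev radius. -/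
def IsChebCenter {D : Type*} [PseudoMetricSpace D] (x : D) (A : Set D) : Prop :=
  coverRad x A = chebRad A

open MeasureTheory Finset

lemma cnd_abs_aux (m : ℕ) (s : Fin m → ℝ) (b : Fin m → ℝ) (hb : ∑ i, b i = 0) :
    ∑ i, ∑ j, b i * b j * |s i - s j| ≤ 0 := by
  rcases Nat.eq_zero_or_pos m with hm | hm
  · subst hm; simp
  have hne : (Finset.univ : Finset (Fin m)).Nonempty := ⟨⟨0, hm⟩, Finset.mem_univ _⟩
  set L := Finset.univ.inf' hne s with hL
  have hLle : ∀ i, L ≤ s i := fun i => Finset.inf'_le _ (Finset.mem_univ i)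
  set F : Fin m → Fin m → ℝ → ℝ := fun i j t =>
    b i * b j * (Set.Ioc L (min (s i) (s j))).indicator (fun _ => (1:ℝ)) t with hF
  have hFint : ∀ i j, Integrable (F i j) := by
    intro i j
    apply Integrable.const_mul
    rw [integrable_indicator_iff measurableSet_Ioc]
    exact integrableOn_const measure_Ioc_lt_top.ne
  have hpt : ∀ t, (∑ i, b i * (Set.Ioc L (s i)).indicator (fun _ => (1:ℝ)) t)^2
      = ∑ i, ∑ j, F i j t := by
    intro t
    rw [sq, Finset.sum_mul_sum]
    refine Finset.sum_congr rfl fun i _ => Finset.sum_congr rfl fun j _ => ?_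
    have h : (Set.Ioc L (s i)).indicator (fun _ => (1:ℝ)) t *
        (Set.Ioc L (s j)).indicator (fun _ => (1:ℝ)) t
        = (Set.Ioc L (min (s i) (s j))).indicator (fun _ => (1:ℝ)) t := by
      rw [← Set.inter_indicator_mul]
      simp [Set.Ioc_inter_Ioc]
    calc b i * (Set.Ioc L (s i)).indicator (fun _ => (1:ℝ)) t *
          (b j * (Set.Ioc L (s j)).indicator (fun _ => (1:ℝ)) t)
        = b i * b j * ((Set.Ioc L (s i)).indicator (fun _ => (1:ℝ)) t *
          (Set.Ioc L (s j)).indicator (fun _ => (1:ℝ)) t) := by ring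
      _ = F i j t := by rw [h]
  have hmin : 0 ≤ ∑ i, ∑ j, b i * b j * (min (s i) (s j) - L) := by
    have h0 : 0 ≤ ∫ t, (∑ i, b i * (Set.Ioc L (s i)).indicator (fun _ => (1:ℝ)) t)^2 :=
      integral_nonneg fun t => sq_nonneg _
    have h1 : ∫ t, (∑ i, b i * (Set.Ioc L (s i)).indicator (fun _ => (1:ℝ)) t)^2
        = ∑ i, ∑ j, b i * b j * (min (s i) (s j) - L) := by
      simp_rw [hpt]
      rw [integral_finset_sum _ (fun i _ => integrable_finset_sum _ (fun j _ => hFint i j))]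
      refine Finset.sum_congr rfl fun i _ => ?_
      rw [integral_finset_sum _ (fun j _ => hFint i j)]
      refine Finset.sum_congr rfl fun j _ => ?_
      rw [hF]
      rw [MeasureTheory.integral_const_mul]
      rw [integral_indicator measurableSet_Ioc]
      rw [setIntegral_const, smul_eq_mul, mul_one, Real.volume_real_Ioc,
        max_eq_left (by simp [hLle i, hLle j] : (0:ℝ) ≤ min (s i) (s j) - L)]
    linarith [h1 ▸ h0]
  have hsum0 : ∑ i, ∑ j, b i * b j * L = 0 := by
    simp_rw [show ∀ i : Fin m, ∑ j, b i * b j * L = b i * L * ∑ j, b j from fun i => by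
      rw [Finset.mul_sum]; exact Finset.sum_congr rfl fun j _ => by ring]
    simp [hb]
  have hmin' : 0 ≤ ∑ i, ∑ j, b i * b j * min (s i) (s j) := by
    have : ∑ i, ∑ j, b i * b j * (min (s i) (s j) - L)
        = ∑ i, ∑ j, b i * b j * min (s i) (s j) - ∑ i, ∑ j, b i * b j * L := by
      rw [← Finset.sum_sub_distrib]
      refine Finset.sum_congr rfl fun i _ => ?_
      rw [← Finset.sum_sub_distrib]
      exact Finset.sum_congr rfl fun j _ => by ring
    rw [this, hsum0, sub_zero] at hmin
    exact hmin
  have e1 : ∑ i, ∑ j, b i * b j * s i = 0 := by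
    simp_rw [show ∀ i : Fin m, ∑ j, b i * b j * s i = b i * s i * ∑ j, b j from fun i => by
      rw [Finset.mul_sum]; exact Finset.sum_congr rfl fun j _ => by ring]
    simp [hb]
  have e2 : ∑ i, ∑ j, b i * b j * s j = 0 := by
    rw [Finset.sum_comm]
    simp_rw [show ∀ j : Fin m, ∑ i, b i * b j * s j = b j * s j * ∑ i, b i from fun j => by
      rw [Finset.mul_sum]; exact Finset.sum_congr rfl fun i _ => by ring]
    simp [hb]
  have habs : ∀ x y : ℝ, |x - y| = x + y - 2 * min x y := by
    intro x y
    rcases le_total x y with h | h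
    · rw [abs_of_nonpos (by linarith), min_eq_left h]; ring
    · rw [abs_of_nonneg (by linarith), min_eq_right h]; ring
  have key : ∑ i, ∑ j, b i * b j * |s i - s j|
      = (∑ i, ∑ j, b i * b j * s i) + (∑ i, ∑ j, b i * b j * s j)
        - 2 * ∑ i, ∑ j, b i * b j * min (s i) (s j) := by
    rw [Finset.mul_sum, ← Finset.sum_add_distrib, ← Finset.sum_sub_distrib]
    refine Finset.sum_congr rfl fun i _ => ?_
    rw [Finset.mul_sum, ← Finset.sum_add_distrib, ← Finset.sum_sub_distrib]
    refine Finset.sum_congr rfl fun j _ => ?_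
    rw [habs]; ring
  rw [key, e1, e2]
  linarith

/-- If the pseudometric `d` is CND and Chebyshev centers exist for all nonempty
bounded sets, then the ball-Hausdorff distance
`bh(A₁, A₂) = d(c(A₁), c(A₂)) + |R(A₁) − R(A₂)|` is CND on the class of
nonempty bounded subsets of `D`. -/
theorem bh_cnd {D : Type*} [PseudoMetricSpace D]
    (hd : IsCND (fun s t : D => dist s t))
    (c : Set D → D)
    (hc : ∀ A : Set D, A.Nonempty → Bornology.IsBounded A → IsChebCenter (c A) A) :
    IsCND (fun A₁ A₂ : {A : Set D // A.Nonempty ∧ Bornology.IsBounded A} =>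
      dist (c A₁.1) (c A₂.1) + |chebRad A₁.1 - chebRad A₂.1|) := by
  intro m s b hb
  have h1 := hd m (fun i => c (s i).1) b hb
  have h2 := cnd_abs_aux m (fun i => chebRad (s i).1) b hb
  have key : ∑ i, ∑ j, b i * b j *
      (dist (c (s i).1) (c (s j).1) + |chebRad (s i).1 - chebRad (s j).1|)
      = (∑ i, ∑ j, b i * b j * dist (c (s i).1) (c (s j).1))
        + ∑ i, ∑ j, b i * b j * |chebRad (s i).1 - chebRad (s j).1| := by
    rw [← Finset.sum_add_distrib]
    refine Finset.sum_congr rfl fun i _ => ?_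
    rw [← Finset.sum_add_distrib]
    exact Finset.sum_congr rfl fun j _ => by ring
  simp only at key ⊢
  rw [key]
  simp only at h1 h2
  linarith
end

section
/- If d is a conditionally negative definite pseudometric on D with d(s, s) = 0 for all s, then for any κ > 0 the kernel k(s, t) = exp(−κ d(s, t)) is positive semidefinite: for all s₁, …, s_m ∈ D and real a₁, …, a_m, ∑ᵢ∑ⱼ aᵢaⱼ exp(−κ d(sᵢ, sⱼ)) ≥ 0. -/
open Matrix Finset

theorem my_quad_of_psd {m : ℕ} {M : Matrix (Fin m) (Fin m) ℝ} (h : M.PosSemidef) (x : Fin m → ℝ) :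
    0 ≤ ∑ i, ∑ j, x i * x j * M i j := by
  have := h.dotProduct_mulVec_nonneg x
  simpa [dotProduct, Matrix.mulVec, Finset.mul_sum, mul_assoc, mul_comm, mul_left_comm] using this

theorem my_psd_of_quad {m : ℕ} {M : Matrix (Fin m) (Fin m) ℝ} (hsym : M.IsHermitian)
    (h : ∀ x : Fin m → ℝ, 0 ≤ ∑ i, ∑ j, x i * x j * M i j) : M.PosSemidef :=
  Matrix.PosSemidef.of_dotProduct_mulVec_nonneg hsym fun x => by
    simpa [dotProduct, Matrix.mulVec, Finset.mul_sum, mul_assoc, mul_comm, mul_left_comm] using h x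

open scoped MatrixOrder in
theorem my_schur {m : ℕ} {A B : Matrix (Fin m) (Fin m) ℝ}
    (hA : A.PosSemidef) (hB : B.PosSemidef) :
    (Matrix.of fun i j => A i j * B i j).PosSemidef := by
  set C := CFC.sqrt B with hC
  have hCsym : C.IsHermitian := (CFC.sqrt_nonneg B).posSemidef.1
  have hCC : C * C = B := CFC.sqrt_mul_sqrt_self B hB.nonneg
  have hBent : ∀ i j, B i j = ∑ k, C i k * C j k := by
    intro i j
    rw [← hCC, Matrix.mul_apply]
    exact Finset.sum_congr rfl fun k _ => by rw [← hCsym.apply k j, star_trivial]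
  have hsym : (Matrix.of fun i j => A i j * B i j).IsHermitian := by
    ext i j
    simp [← hA.1.apply i j, ← hB.1.apply i j]
  refine my_psd_of_quad hsym fun x => ?_
  have : ∑ i, ∑ j, x i * x j * (A i j * B i j)
      = ∑ k, ∑ i, ∑ j, (x i * C i k) * (x j * C j k) * A i j := by
    have h1 : ∀ i j, x i * x j * (A i j * B i j)
        = ∑ k, (x i * C i k) * (x j * C j k) * A i j := by
      intro i j
      rw [hBent, Finset.mul_sum]
      · rw [Finset.mul_sum]
        exact Finset.sum_congr rfl fun k _ => by ring
    calc ∑ i, ∑ j, x i * x j * (A i j * B i j)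
        = ∑ i, ∑ j, ∑ k, (x i * C i k) * (x j * C j k) * A i j := by
          exact Finset.sum_congr rfl fun i _ => Finset.sum_congr rfl fun j _ => h1 i j
      _ = ∑ i, ∑ k, ∑ j, (x i * C i k) * (x j * C j k) * A i j :=
          Finset.sum_congr rfl fun i _ => Finset.sum_comm
      _ = ∑ k, ∑ i, ∑ j, (x i * C i k) * (x j * C j k) * A i j := Finset.sum_comm
  simp only [Matrix.of_apply, this]
  exact Finset.sum_nonneg fun k _ => my_quad_of_psd hA _

theorem my_ones_psd (m : ℕ) : (Matrix.of fun _ _ : Fin m => (1 : ℝ)).PosSemidef := by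
  refine my_psd_of_quad (by ext i j; simp) fun x => ?_
  have : ∑ i, ∑ j, x i * x j * (Matrix.of fun _ _ : Fin m => (1:ℝ)) i j = (∑ i, x i)^2 := by
    simp [Finset.sum_mul, Finset.mul_sum, sq, mul_comm]
  rw [this]; positivity

theorem my_hpow_psd {m : ℕ} {M : Matrix (Fin m) (Fin m) ℝ} (hM : M.PosSemidef) (n : ℕ) :
    (Matrix.of fun i j => (M i j)^n).PosSemidef := by
  induction n with
  | zero => simpa using my_ones_psd m
  | succ n ih =>
    have := my_schur ih hM
    have heq : (Matrix.of fun i j => (M i j)^(n+1)) = Matrix.of fun i j => (Matrix.of fun i j => (M i j)^n) i j * M i j := by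
      ext i j; simp [pow_succ]
    rw [heq]; exact this

theorem my_exp_psd {m : ℕ} {M : Matrix (Fin m) (Fin m) ℝ} (hM : M.PosSemidef) (x : Fin m → ℝ) :
    0 ≤ ∑ i, ∑ j, x i * x j * Real.exp (M i j) := by
  have hterm : ∀ n : ℕ, 0 ≤ ∑ i, ∑ j, x i * x j * ((M i j)^n / n.factorial) := by
    intro n
    have h := my_hpow_psd hM n
    have h2 := h.dotProduct_mulVec_nonneg x
    have : (0:ℝ) ≤ ∑ i, ∑ j, x i * x j * (M i j)^n := by
      simpa [dotProduct, Matrix.mulVec, Finset.mul_sum, mul_assoc, mul_comm, mul_left_comm] using h2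
    have := div_nonneg this (Nat.cast_nonneg n.factorial)
    rw [Finset.sum_div] at this
    refine le_of_le_of_eq this (Eq.symm ?_)
    exact Finset.sum_congr rfl fun i _ => by rw [Finset.sum_div]; exact Finset.sum_congr rfl fun j _ => by ring
  -- exp as tsum
  have hexp : ∀ y : ℝ, Real.exp y = ∑' n : ℕ, y^n / n.factorial := fun y => by
    rw [Real.exp_eq_exp_ℝ, NormedSpace.exp_eq_tsum_div]
  have hsummable : ∀ i j, Summable (fun n : ℕ => x i * x j * ((M i j)^n / n.factorial)) := by
    intro i j
    exact (Real.summable_pow_div_factorial (M i j)).mul_left _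
  calc (0:ℝ) ≤ ∑' n : ℕ, ∑ i, ∑ j, x i * x j * ((M i j)^n / n.factorial) :=
        tsum_nonneg hterm
    _ = ∑ i, ∑ j, ∑' n : ℕ, x i * x j * ((M i j)^n / n.factorial) := by
        rw [Summable.tsum_finsetSum (fun i _ => summable_sum (fun j _ => hsummable i j))]
        exact Finset.sum_congr rfl fun i _ => Summable.tsum_finsetSum fun j _ => hsummable i j
    _ = ∑ i, ∑ j, x i * x j * Real.exp (M i j) := by
        refine Finset.sum_congr rfl fun i _ => Finset.sum_congr rfl fun j _ => ?_
        rw [hexp, tsum_mul_left]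

/-- Schoenberg: if `d` is a CND pseudometric (symmetric, vanishing on the
diagonal, nonnegative), then `exp(−κ d(s,t))` is positive semidefinite for
every `κ > 0`. -/
theorem exp_neg_cnd_psd {D : Type*} (d : D → D → ℝ)
    (hnonneg : ∀ s t, 0 ≤ d s t)
    (hsymm : ∀ s t, d s t = d t s)
    (hdiag : ∀ s, d s s = 0)
    (hcnd : ∀ (m : ℕ) (s : Fin m → D) (b : Fin m → ℝ), (∑ i, b i = 0) →
      ∑ i, ∑ j, b i * b j * d (s i) (s j) ≤ 0)
    (κ : ℝ) (hκ : 0 < κ) :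
    ∀ (m : ℕ) (s : Fin m → D) (a : Fin m → ℝ),
      0 ≤ ∑ i, ∑ j, a i * a j * Real.exp (-κ * d (s i) (s j)) := by
  intro m s a
  rcases m with _ | n
  · simp
  set t0 := s 0 with ht0
  set K : Matrix (Fin (n+1)) (Fin (n+1)) ℝ :=
    Matrix.of fun i j => κ * (d (s i) t0 + d (s j) t0 - d (s i) (s j)) with hKdef
  -- K is PSD
  have hKpsd : K.PosSemidef := by
    refine my_psd_of_quad ?_ fun x => ?_
    · ext i j
      simp only [conjTranspose_apply, Matrix.of_apply, star_trivial, hKdef]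
      rw [hsymm (s j) (s i)]; ring
    · set S := ∑ i, x i with hS
      set T := ∑ i, x i * d (s i) t0 with hT
      -- CND gives Q ≤ 2 S T
      have hQ : ∑ i, ∑ j, x i * x j * d (s i) (s j) ≤ 2 * S * T := by
        have hb : ∑ i, (Fin.snoc x (-S) : Fin (n+2) → ℝ) i = 0 := by
          rw [Fin.sum_univ_castSucc]
          simp [hS]
        have h := hcnd (n+2) (Fin.snoc s t0) (Fin.snoc x (-S)) hb
        rw [Fin.sum_univ_castSucc] at h
        simp only [Fin.snoc_castSucc, Fin.snoc_last] at h
        have h1 : ∀ i : Fin (n+1), (∑ j : Fin (n+2),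
            x i * (Fin.snoc x (-S) : Fin (n+2) → ℝ) j * d (s i) ((Fin.snoc s t0 : Fin (n+2) → D) j))
            = (∑ j, x i * x j * d (s i) (s j)) + x i * (-S) * d (s i) t0 := by
          intro i
          rw [Fin.sum_univ_castSucc]
          simp
        have h2 : (∑ j : Fin (n+2),
            (-S) * (Fin.snoc x (-S) : Fin (n+2) → ℝ) j * d t0 ((Fin.snoc s t0 : Fin (n+2) → D) j))
            = (∑ j, (-S) * x j * d t0 (s j)) + (-S) * (-S) * d t0 t0 := by
          rw [Fin.sum_univ_castSucc]
          simp
        rw [Finset.sum_congr rfl (fun i _ => h1 i), h2, Finset.sum_add_distrib, hdiag] at h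
        have e1 : ∑ i, x i * (-S) * d (s i) t0 = -S * T := by
          rw [hT, Finset.mul_sum]
          exact Finset.sum_congr rfl fun i _ => by ring
        have e2 : ∑ j, (-S) * x j * d t0 (s j) = -S * T := by
          rw [hT, Finset.mul_sum]
          exact Finset.sum_congr rfl fun j _ => by rw [hsymm t0 (s j)]; ring
        rw [e1, e2] at h
        nlinarith [h]
      have expand : ∑ i, ∑ j, x i * x j * K i j
          = κ * (2 * S * T - ∑ i, ∑ j, x i * x j * d (s i) (s j)) := by
        have step : ∑ i, ∑ j, x i * x j * K i j
            = (∑ i, ∑ j, (κ * (x i * d (s i) t0)) * x j)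
              + (∑ i, ∑ j, x i * ((κ * d (s j) t0) * x j))
              - ∑ i, ∑ j, κ * (x i * x j * d (s i) (s j)) := by
          simp only [← Finset.sum_sub_distrib, ← Finset.sum_add_distrib]
          refine Finset.sum_congr rfl fun i _ => Finset.sum_congr rfl fun j _ => ?_
          simp only [hKdef, Matrix.of_apply]; ring
        rw [step, ← Finset.sum_mul_sum, ← Finset.sum_mul_sum]
        have c1 : ∑ i, κ * (x i * d (s i) t0) = κ * T := by rw [hT, Finset.mul_sum]
        have c2 : ∑ j, (κ * d (s j) t0) * x j = κ * T := by
          rw [hT, Finset.mul_sum]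
          exact Finset.sum_congr rfl fun j _ => by ring
        have c3 : ∑ i, ∑ j, κ * (x i * x j * d (s i) (s j))
            = κ * ∑ i, ∑ j, x i * x j * d (s i) (s j) := by
          rw [Finset.mul_sum]
          exact Finset.sum_congr rfl fun i _ => by rw [Finset.mul_sum]
        rw [c1, c2, c3, ← hS]
        ring
      rw [expand]
      have := sub_nonneg.mpr hQ
      positivity
  -- reduce to exp of K
  have key : ∑ i, ∑ j, a i * a j * Real.exp (-κ * d (s i) (s j))
      = ∑ i, ∑ j, (a i * Real.exp (-κ * d (s i) t0)) * (a j * Real.exp (-κ * d (s j) t0))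
          * Real.exp (K i j) := by
    refine Finset.sum_congr rfl fun i _ => Finset.sum_congr rfl fun j _ => ?_
    rw [hKdef]
    simp only [Matrix.of_apply]
    rw [show κ * (d (s i) t0 + d (s j) t0 - d (s i) (s j))
        = (-κ * d (s i) (s j)) - (-κ * d (s i) t0) - (-κ * d (s j) t0) by ring,
      Real.exp_sub, Real.exp_sub]
    field_simp [Real.exp_ne_zero]
  rw [key]
  exact my_exp_psd hKpsd _
end

section
/- If d is a conditionally negative definite pseudometric on D (symmetric, vanishing on the diagonal), then for any ν ∈ (0, 1], the function d^ν is also conditionally negative definite. -/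
open MeasureTheory Set
open scoped BigOperators Nat

section Aux

lemma cnd_aux_expand {D : Type*} (d : D → D → ℝ) (m : ℕ) (hm : 0 < m) (s : Fin m → D)
    (c : Fin m → ℝ)
    (hdiag : ∀ s, d s s = 0) (a : Fin m → ℝ) (h1 : ∀ j, d (s ⟨0,hm⟩) (s j) = a j)
    (h2 : ∀ j, d (s j) (s ⟨0,hm⟩) = a j) (S A Q : ℝ) (hS : S = ∑ i, c i)
    (hA : A = ∑ i, c i * a i) (hQ : Q = ∑ i, ∑ j, c i * c j * d (s i) (s j)) :
    (∑ i : Fin (m+1), ∑ j : Fin (m+1),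
        (Fin.cons (-S) c : Fin (m+1) → ℝ) i * (Fin.cons (-S) c : Fin (m+1) → ℝ) j *
          d ((Fin.cons (s ⟨0,hm⟩) s : Fin (m+1) → D) i) ((Fin.cons (s ⟨0,hm⟩) s : Fin (m+1) → D) j))
      = Q - 2 * S * A := by
  rw [Fin.sum_univ_succ]
  simp only [Fin.cons_zero, Fin.cons_succ, Fin.sum_univ_succ, hdiag, h1, h2,
    Finset.sum_add_distrib]
  have e1 : ∑ j : Fin m, -S * c j * a j = -(S * A) := by
    rw [hA, Finset.mul_sum, ← Finset.sum_neg_distrib]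
    exact Finset.sum_congr rfl fun j _ => by ring
  have e2 : ∑ i : Fin m, c i * -S * a i = -(S * A) := by
    rw [hA, Finset.mul_sum, ← Finset.sum_neg_distrib]
    exact Finset.sum_congr rfl fun i _ => by ring
  rw [e1, e2, hQ]
  ring

lemma cnd_aux_hadamard_pow_nonneg {m : ℕ} (K : Matrix (Fin m) (Fin m) ℝ)
    (hK : K.PosSemidef) (n : ℕ) (c : Fin m → ℝ) :
    0 ≤ ∑ i, ∑ j, c i * c j * (K i j) ^ n := by
  obtain ⟨B, hB⟩ : ∃ B : Matrix (Fin m) (Fin m) ℝ, K = B.conjTranspose * B := by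
    open scoped MatrixOrder in exact CStarAlgebra.nonneg_iff_eq_star_mul_self.mp hK.nonneg
  have hKij : ∀ i j, K i j = ∑ k, B k i * B k j := by
    intro i j; rw [hB]; simp [Matrix.mul_apply, Matrix.conjTranspose_apply]
  set F : Fin m → (Fin n → Fin m) → ℝ := fun i p => c i * ∏ l, B (p l) i with hF
  have expand : ∀ i j : Fin m, c i * c j * K i j ^ n = ∑ p : Fin n → Fin m, F i p * F j p := by
    intro i j
    rw [hKij, Finset.sum_pow', Fintype.piFinset_univ, Finset.mul_sum]
    refine Finset.sum_congr rfl fun p _ => ?_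
    rw [hF]; dsimp only; rw [Finset.prod_mul_distrib]; ring
  calc (0:ℝ) ≤ ∑ p : Fin n → Fin m, (∑ i, F i p) ^ 2 := by positivity
    _ = ∑ p, ∑ i, ∑ j, F i p * F j p := by simp_rw [sq, Finset.sum_mul_sum]
    _ = ∑ i, ∑ p, ∑ j, F i p * F j p := Finset.sum_comm
    _ = ∑ i, ∑ j, ∑ p, F i p * F j p :=
        Finset.sum_congr rfl fun i _ => Finset.sum_comm
    _ = ∑ i, ∑ j, c i * c j * (K i j) ^ n :=
        Finset.sum_congr rfl fun i _ => Finset.sum_congr rfl fun j _ => (expand i j).symm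

lemma cnd_aux_exp_entry_nonneg {m : ℕ} (K : Matrix (Fin m) (Fin m) ℝ)
    (hpsd : ∀ n : ℕ, ∀ c : Fin m → ℝ, 0 ≤ ∑ i, ∑ j, c i * c j * (K i j) ^ n)
    (c : Fin m → ℝ) :
    0 ≤ ∑ i, ∑ j, c i * c j * Real.exp (K i j) := by
  have hsummable : ∀ i j : Fin m, Summable (fun n : ℕ => c i * c j * (K i j ^ n / n !)) :=
    fun i j => (Real.summable_pow_div_factorial _).mul_left _
  have h1 : ∀ i j : Fin m, c i * c j * Real.exp (K i j)
      = ∑' n : ℕ, c i * c j * (K i j ^ n / n !) := by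
    intro i j
    rw [Real.exp_eq_exp_ℝ, NormedSpace.exp_eq_tsum_div, tsum_mul_left]
  have h2 : (∑ i, ∑ j, c i * c j * Real.exp (K i j))
      = ∑' n : ℕ, ∑ i, ∑ j, c i * c j * (K i j ^ n / n !) := by
    simp_rw [h1]
    have inner : ∀ i : Fin m, (∑ j, ∑' n : ℕ, c i * c j * (K i j ^ n / n !))
        = ∑' n : ℕ, ∑ j, c i * c j * (K i j ^ n / n !) :=
      fun i => (Summable.tsum_finsetSum fun j _ => hsummable i j).symm
    simp_rw [inner]
    exact (Summable.tsum_finsetSum fun i _ => summable_sum fun j _ => hsummable i j).symm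
  rw [h2]
  refine tsum_nonneg fun n => ?_
  have : (∑ i, ∑ j, c i * c j * (K i j ^ n / n !))
      = (∑ i, ∑ j, c i * c j * K i j ^ n) * ((n ! : ℝ))⁻¹ := by
    simp_rw [Finset.sum_mul]
    exact Finset.sum_congr rfl fun i _ => Finset.sum_congr rfl fun j _ => by ring
  rw [this]
  exact mul_nonneg (hpsd n c) (by positivity)

lemma cnd_aux_quad_form_eq {m : ℕ} (M : Matrix (Fin m) (Fin m) ℝ) (x : Fin m → ℝ) :
    dotProduct (star x) (M.mulVec x) = ∑ i, ∑ j, x i * x j * M i j := by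
  simp only [dotProduct, Matrix.mulVec, star_trivial, Finset.mul_sum]
  exact Finset.sum_congr rfl fun i _ => Finset.sum_congr rfl fun j _ => by ring

lemma cnd_aux_schoenberg {D : Type*} (d : D → D → ℝ)
    (hsymm : ∀ s t, d s t = d t s)
    (hdiag : ∀ s, d s s = 0)
    (hcnd : ∀ (m : ℕ) (s : Fin m → D) (b : Fin m → ℝ), (∑ i, b i = 0) →
      ∑ i, ∑ j, b i * b j * d (s i) (s j) ≤ 0)
    (t : ℝ) (ht : 0 ≤ t) (m : ℕ) (s : Fin m → D) (b : Fin m → ℝ) (hb : ∑ i, b i = 0) :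
    0 ≤ ∑ i, ∑ j, b i * b j * Real.exp (-(t * d (s i) (s j))) := by
  obtain rfl | hm := Nat.eq_zero_or_pos m
  · simp
  set K : Matrix (Fin m) (Fin m) ℝ :=
    Matrix.of (fun i j => t * (d (s i) (s ⟨0, hm⟩) + d (s j) (s ⟨0, hm⟩) - d (s i) (s j)))
    with hKdef
  have hKapp : ∀ i j, K i j
      = t * (d (s i) (s ⟨0, hm⟩) + d (s j) (s ⟨0, hm⟩) - d (s i) (s j)) := fun i j => rfl
  have hKpsd : K.PosSemidef := by
    refine Matrix.posSemidef_iff_dotProduct_mulVec.mpr ⟨?_, ?_⟩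
    · ext i j
      simp only [Matrix.conjTranspose_apply, star_trivial, hKapp]
      rw [hsymm (s j) (s i)]; ring
    · intro c
      rw [cnd_aux_quad_form_eq]
      have key := cnd_aux_expand d m hm s c hdiag (fun i => d (s i) (s ⟨0, hm⟩))
        (fun j => hsymm _ _) (fun j => rfl) (∑ i, c i) (∑ i, c i * d (s i) (s ⟨0, hm⟩))
        (∑ i, ∑ j, c i * c j * d (s i) (s j)) rfl rfl rfl
      have hC := hcnd (m+1) (Fin.cons (s ⟨0, hm⟩) s) (Fin.cons (-(∑ i, c i)) c)
        (by rw [Fin.sum_cons]; ring)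
      rw [key] at hC
      have eK : (∑ i, ∑ j, c i * c j * K i j)
          = t * (2 * (∑ i, c i) * (∑ i, c i * d (s i) (s ⟨0, hm⟩))
              - (∑ i, ∑ j, c i * c j * d (s i) (s j))) := by
        have step : ∀ i j : Fin m, c i * c j * K i j =
            t * (c i * d (s i) (s ⟨0, hm⟩) * c j) + t * (c i * (c j * d (s j) (s ⟨0, hm⟩)))
              - t * (c i * c j * d (s i) (s j))
            := fun i j => by rw [hKapp]; ring
        simp_rw [step, Finset.sum_sub_distrib, Finset.sum_add_distrib, ← Finset.mul_sum,
          ← Finset.sum_mul]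
        ring
      rw [eK]
      have h0 : 0 ≤ 2 * (∑ i, c i) * (∑ i, c i * d (s i) (s ⟨0, hm⟩))
          - (∑ i, ∑ j, c i * c j * d (s i) (s j)) := by linarith
      positivity
  have term : ∀ i j, b i * b j * Real.exp (-(t * d (s i) (s j)))
      = (b i * Real.exp (-(t * d (s i) (s ⟨0, hm⟩))))
        * (b j * Real.exp (-(t * d (s j) (s ⟨0, hm⟩)))) * Real.exp (K i j) := by
    intro i j
    rw [hKapp, show t * (d (s i) (s ⟨0, hm⟩) + d (s j) (s ⟨0, hm⟩) - d (s i) (s j))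
        = -(t * d (s i) (s j)) - (-(t * d (s i) (s ⟨0, hm⟩))) - (-(t * d (s j) (s ⟨0, hm⟩)))
        from by ring, Real.exp_sub, Real.exp_sub]
    field_simp
  simp_rw [term]
  exact cnd_aux_exp_entry_nonneg K (cnd_aux_hadamard_pow_nonneg K hKpsd)
    (fun i => b i * Real.exp (-(t * d (s i) (s ⟨0, hm⟩))))

lemma cnd_aux_rpow_contOn {e : ℝ} : ContinuousOn (fun t : ℝ => t ^ e) (Ioi (0:ℝ)) := fun t ht =>
  (Real.continuousAt_rpow_const t _ (Or.inl (ne_of_gt ht))).continuousWithinAt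

lemma cnd_aux_one_sub_exp_neg_nonneg {x : ℝ} (hx : 0 ≤ x) : 0 ≤ 1 - Real.exp (-x) := by
  have := Real.exp_le_one_iff.mpr (neg_nonpos.mpr hx); linarith

lemma cnd_aux_one_sub_exp_neg_le_one {x : ℝ} : 1 - Real.exp (-x) ≤ 1 := by
  have := Real.exp_pos (-x); linarith

lemma cnd_aux_one_sub_exp_neg_le {x : ℝ} : 1 - Real.exp (-x) ≤ x := by
  have := Real.add_one_le_exp (-x); linarith

lemma cnd_aux_base_integrable {ν : ℝ} (hν0 : 0 < ν) (hν1 : ν < 1) :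
    IntegrableOn (fun t : ℝ => (1 - Real.exp (-t)) * t ^ (-ν - 1)) (Ioi 0) := by
  have hcont : ContinuousOn (fun t : ℝ => (1 - Real.exp (-t)) * t ^ (-ν - 1)) (Ioi 0) :=
    ContinuousOn.mul (by fun_prop) cnd_aux_rpow_contOn
  rw [← Ioc_union_Ioi_eq_Ioi (by norm_num : (0:ℝ) ≤ 1)]
  refine IntegrableOn.union ?_ ?_
  · have hg : IntegrableOn (fun t : ℝ => t ^ (-ν)) (Ioc 0 1) :=
      ((intervalIntegral.integrableOn_Ioo_rpow_iff (by norm_num : (0:ℝ) < 2)).mpr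
        (by linarith)).mono_set (Ioc_subset_Ioo_right one_lt_two)
    refine Integrable.mono hg
      ((hcont.mono (Ioc_subset_Ioi_self (a := (1:ℝ)) (b := 0))).aestronglyMeasurable
        measurableSet_Ioc) ?_
    refine (ae_restrict_iff' measurableSet_Ioc).mpr (Filter.Eventually.of_forall fun t ht => ?_)
    have ht0 : 0 < t := ht.1
    have hrp : (0:ℝ) < t ^ (-ν - 1) := Real.rpow_pos_of_pos ht0 _
    rw [Real.norm_eq_abs, Real.norm_eq_abs, abs_of_nonneg (Real.rpow_nonneg ht0.le _),
      abs_of_nonneg (mul_nonneg (cnd_aux_one_sub_exp_neg_nonneg ht0.le) hrp.le)]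
    calc (1 - Real.exp (-t)) * t ^ (-ν - 1) ≤ t * t ^ (-ν - 1) :=
          mul_le_mul_of_nonneg_right cnd_aux_one_sub_exp_neg_le hrp.le
      _ = t ^ (-ν) := by
          have h := (Real.rpow_add ht0 1 (-ν - 1)).symm
          rw [Real.rpow_one] at h
          rwa [show (1:ℝ) + (-ν - 1) = -ν by ring] at h
  · have hg : IntegrableOn (fun t : ℝ => t ^ (-ν - 1)) (Ioi 1) :=
      integrableOn_Ioi_rpow_of_lt (by linarith) one_pos
    refine Integrable.mono hg
      ((hcont.mono (Ioi_subset_Ioi (by norm_num))).aestronglyMeasurable measurableSet_Ioi) ?_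
    refine (ae_restrict_iff' measurableSet_Ioi).mpr (Filter.Eventually.of_forall fun t ht => ?_)
    have ht0 : (0:ℝ) < t := lt_trans one_pos ht
    have hrp : (0:ℝ) < t ^ (-ν - 1) := Real.rpow_pos_of_pos ht0 _
    rw [Real.norm_eq_abs, Real.norm_eq_abs, abs_of_nonneg (Real.rpow_nonneg ht0.le _),
      abs_of_nonneg (mul_nonneg (cnd_aux_one_sub_exp_neg_nonneg ht0.le) hrp.le)]
    nlinarith [cnd_aux_one_sub_exp_neg_le_one (x := t), cnd_aux_one_sub_exp_neg_nonneg ht0.le]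

lemma cnd_aux_base_pos {ν : ℝ} (hν0 : 0 < ν) (hν1 : ν < 1) :
    0 < ∫ t in Ioi (0:ℝ), (1 - Real.exp (-t)) * t ^ (-ν - 1) := by
  have hnn : 0 ≤ᵐ[volume.restrict (Ioi (0:ℝ))]
      fun t => (1 - Real.exp (-t)) * t ^ (-ν - 1) :=
    (ae_restrict_iff' measurableSet_Ioi).mpr (Filter.Eventually.of_forall fun t ht =>
      mul_nonneg (cnd_aux_one_sub_exp_neg_nonneg (le_of_lt ht)) (Real.rpow_nonneg (le_of_lt ht) _))
  rw [setIntegral_pos_iff_support_of_nonneg_ae hnn (cnd_aux_base_integrable hν0 hν1)]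
  have hsub : Ioi (0:ℝ) ⊆
      Function.support (fun t => (1 - Real.exp (-t)) * t ^ (-ν - 1)) ∩ Ioi 0 := by
    intro t ht
    have h1 : 0 < 1 - Real.exp (-t) := by
      have := Real.exp_lt_one_iff.mpr (neg_lt_zero.mpr ht); linarith
    have h2 : 0 < t ^ (-ν - 1) := Real.rpow_pos_of_pos ht _
    exact ⟨Function.mem_support.mpr (ne_of_gt (mul_pos h1 h2)), ht⟩
  calc (0:ENNReal) < volume (Ioi (0:ℝ)) := by simp [Real.volume_Ioi]
    _ ≤ _ := measure_mono hsub

lemma cnd_aux_point_eq {ν : ℝ} {x : ℝ} (hx : 0 < x) : ∀ t ∈ Ioi (0:ℝ),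
    (1 - Real.exp (-(t * x))) * t ^ (-ν - 1)
      = x ^ (ν + 1) • ((1 - Real.exp (-(x * t))) * (x * t) ^ (-ν - 1)) := by
  intro t ht
  rw [smul_eq_mul, Real.mul_rpow hx.le (le_of_lt ht), mul_comm x t]
  rw [show x ^ (ν+1) * ((1 - Real.exp (-(t * x))) * (x ^ (-ν - 1) * t ^ (-ν - 1)))
    = (x ^ (ν+1) * x ^ (-ν - 1)) * ((1 - Real.exp (-(t * x))) * t ^ (-ν - 1)) by ring,
    ← Real.rpow_add hx, show ν + 1 + (-ν - 1) = 0 by ring, Real.rpow_zero, one_mul]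

lemma cnd_aux_subst_eq {ν : ℝ} {x : ℝ} (hx : 0 < x) :
    (∫ t in Ioi (0:ℝ), (1 - Real.exp (-(t * x))) * t ^ (-ν - 1))
      = x ^ ν * ∫ t in Ioi (0:ℝ), (1 - Real.exp (-t)) * t ^ (-ν - 1) := by
  rw [setIntegral_congr_fun measurableSet_Ioi (cnd_aux_point_eq hx), integral_smul,
    integral_comp_mul_left_Ioi (fun u => (1 - Real.exp (-u)) * u ^ (-ν - 1)) 0 hx, mul_zero]
  rw [smul_eq_mul, smul_eq_mul, ← mul_assoc, ← Real.rpow_neg_one x, ← Real.rpow_add hx,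
    show ν + 1 + -1 = ν by ring]

lemma cnd_aux_subst_integrable {ν : ℝ} (hν0 : 0 < ν) (hν1 : ν < 1) {x : ℝ} (hx : 0 < x) :
    IntegrableOn (fun t : ℝ => (1 - Real.exp (-(t * x))) * t ^ (-ν - 1)) (Ioi 0) := by
  have h1 : IntegrableOn
      (fun t : ℝ => ((1 - Real.exp (-(x * t))) * (x * t) ^ (-ν - 1))) (Ioi 0) := by
    have := (integrableOn_Ioi_comp_mul_left_iff
      (fun u => (1 - Real.exp (-u)) * u ^ (-ν - 1)) 0 hx).mpr
    rw [mul_zero] at this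
    exact this (cnd_aux_base_integrable hν0 hν1)
  have h2 : IntegrableOn
      (fun t : ℝ => x ^ (ν + 1) • ((1 - Real.exp (-(x * t))) * (x * t) ^ (-ν - 1)))
      (Ioi 0) := h1.smul (x ^ (ν + 1))
  exact h2.congr_fun (fun t ht => (cnd_aux_point_eq hx t ht).symm) measurableSet_Ioi

end Aux

/-- If `d` is a CND pseudometric (symmetric, vanishing on the diagonal,
nonnegative), then `d^ν` is CND for any `ν ∈ (0, 1]`. -/
theorem cnd_rpow {D : Type*} (d : D → D → ℝ)
    (hnonneg : ∀ s t, 0 ≤ d s t)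
    (hsymm : ∀ s t, d s t = d t s)
    (hdiag : ∀ s, d s s = 0)
    (hcnd : ∀ (m : ℕ) (s : Fin m → D) (b : Fin m → ℝ), (∑ i, b i = 0) →
      ∑ i, ∑ j, b i * b j * d (s i) (s j) ≤ 0)
    (ν : ℝ) (hν0 : 0 < ν) (hν1 : ν ≤ 1) :
    ∀ (m : ℕ) (s : Fin m → D) (b : Fin m → ℝ), (∑ i, b i = 0) →
      ∑ i, ∑ j, b i * b j * (d (s i) (s j)) ^ ν ≤ 0 := by
  rcases eq_or_lt_of_le hν1 with hν | hν
  · subst hν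
    intro m s b hb
    simp_rw [Real.rpow_one]
    exact hcnd m s b hb
  intro m s b hb
  set C : ℝ := ∫ t in Ioi (0:ℝ), (1 - Real.exp (-t)) * t ^ (-ν - 1) with hCdef
  have hC : 0 < C := cnd_aux_base_pos hν0 hν
  -- integrability for every x ≥ 0
  have intg : ∀ x : ℝ, 0 ≤ x →
      IntegrableOn (fun t : ℝ => (1 - Real.exp (-(t * x))) * t ^ (-ν - 1)) (Ioi 0) := by
    intro x hx
    rcases hx.eq_or_lt with rfl | hx'
    · have : (fun t : ℝ => (1 - Real.exp (-(t * 0))) * t ^ (-ν - 1)) = fun _ => (0:ℝ) := by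
        funext t; simp
      rw [this]
      exact integrableOn_zero
    · exact cnd_aux_subst_integrable hν0 hν hx'
  -- integral representation of x ^ ν
  have repr : ∀ x : ℝ, 0 ≤ x →
      C * x ^ ν = ∫ t in Ioi (0:ℝ), (1 - Real.exp (-(t * x))) * t ^ (-ν - 1) := by
    intro x hx
    rcases hx.eq_or_lt with rfl | hx'
    · have : (fun t : ℝ => (1 - Real.exp (-(t * 0))) * t ^ (-ν - 1)) = fun _ => (0:ℝ) := by
        funext t; simp
      rw [this, Real.zero_rpow (ne_of_gt hν0), mul_zero, integral_zero]
    · rw [cnd_aux_subst_eq hx', ← hCdef, mul_comm]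
  have term : ∀ i j : Fin m, C * (b i * b j * d (s i) (s j) ^ ν)
      = ∫ t in Ioi (0:ℝ),
          b i * b j * ((1 - Real.exp (-(t * d (s i) (s j)))) * t ^ (-ν - 1)) := by
    intro i j
    rw [integral_const_mul, ← repr _ (hnonneg _ _)]
    ring
  have key : C * (∑ i, ∑ j, b i * b j * (d (s i) (s j)) ^ ν)
      = ∫ t in Ioi (0:ℝ),
          ∑ i, ∑ j, b i * b j * ((1 - Real.exp (-(t * d (s i) (s j)))) * t ^ (-ν - 1)) := by
    rw [Finset.mul_sum]
    have swap1 : ∀ i : Fin m, C * (∑ j, b i * b j * (d (s i) (s j)) ^ ν)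
        = ∫ t in Ioi (0:ℝ),
            ∑ j, b i * b j * ((1 - Real.exp (-(t * d (s i) (s j)))) * t ^ (-ν - 1)) := by
      intro i
      calc C * (∑ j, b i * b j * (d (s i) (s j)) ^ ν)
          = ∑ j, C * (b i * b j * (d (s i) (s j)) ^ ν) := Finset.mul_sum _ _ _
        _ = ∑ j, ∫ t in Ioi (0:ℝ),
              b i * b j * ((1 - Real.exp (-(t * d (s i) (s j)))) * t ^ (-ν - 1)) :=
            Finset.sum_congr rfl fun j _ => term i j
        _ = _ := (integral_finset_sum Finset.univ
            (fun j _ => ((intg _ (hnonneg (s i) (s j))).const_mul (b i * b j)))).symm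
    simp_rw [swap1]
    exact (integral_finset_sum Finset.univ (fun i _ => integrable_finset_sum Finset.univ
      (fun j _ => ((intg _ (hnonneg (s i) (s j))).const_mul (b i * b j))))).symm
  have hzero : (∑ i, ∑ j, b i * b j) = 0 := by
    simp_rw [← Finset.mul_sum, hb, mul_zero, Finset.sum_const_zero]
  have hle : C * (∑ i, ∑ j, b i * b j * (d (s i) (s j)) ^ ν) ≤ 0 := by
    rw [key]
    refine setIntegral_nonpos measurableSet_Ioi fun t ht => ?_
    have hw : (0:ℝ) ≤ t ^ (-ν - 1) := Real.rpow_nonneg (le_of_lt ht) _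
    have hc := cnd_aux_schoenberg d hsymm hdiag hcnd t (le_of_lt ht) m s b hb
    have expand : (∑ i, ∑ j, b i * b j * ((1 - Real.exp (-(t * d (s i) (s j)))) * t ^ (-ν - 1)))
        = (∑ i, ∑ j, b i * b j) * t ^ (-ν - 1)
          - (∑ i, ∑ j, b i * b j * Real.exp (-(t * d (s i) (s j)))) * t ^ (-ν - 1) := by
      rw [Finset.sum_mul, Finset.sum_mul, ← Finset.sum_sub_distrib]
      refine Finset.sum_congr rfl fun i _ => ?_
      rw [Finset.sum_mul, Finset.sum_mul, ← Finset.sum_sub_distrib]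
      exact Finset.sum_congr rfl fun j _ => by ring
    rw [expand, hzero, zero_mul, zero_sub]
    exact neg_nonpos.mpr (mul_nonneg hc hw)
  have h0 : C * (∑ i, ∑ j, b i * b j * (d (s i) (s j)) ^ ν) ≤ C * 0 := by
    rwa [mul_zero]
  exact le_of_mul_le_mul_left h0 hC
end
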